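/- arXiv:1904.08871 — 3 statements merged into one kernel-verified Lean document; each statement's English description precedes it below -/
import Mathlib

section
/- Let λ = 1/2, let ω = (√5−1)/2, and let E ∈ ℝ with |E| ≤ 2.5. Let N ≥ 1, P = 2001², and 0 < ε < 1. Then ℙ(|Q_N(P) − L_N(1/2,E)| > ε×10⁻²) ≤ 1/(300ε²), where the probability is with respect to the i.i.d. uniform sample points. -/
open scoped Matrix.Norms.L2Operator

noncomputable section

open Matrix MeasureTheory ProbabilityTheory

/-- Skew-shift potential `v_n(x,y) = 2 cos(2π(n(n−1)/2·ω + n·y + x))`. -/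
def skewV (ω : ℝ) (n : ℤ) (x y : ℝ) : ℝ :=
  2 * Real.cos (2 * Real.pi * ((n * (n - 1) : ℝ) / 2 * ω + (n : ℝ) * y + x))

/-- One-step transfer matrix `A_j`. -/
def Amat (lam E ω : ℝ) (j : ℤ) (x y : ℝ) : Matrix (Fin 2) (Fin 2) ℝ :=
  !![E - lam * skewV ω j x y, -1; 1, 0]

/-- n-step transfer matrix `M_n = A_n ⋯ A_1`. -/
def Mmat (lam E ω : ℝ) : ℕ → ℝ → ℝ → Matrix (Fin 2) (Fin 2) ℝ
  | 0, _, _ => 1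
  | (n+1), x, y => Amat lam E ω (n + 1 : ℕ) x y * Mmat lam E ω n x y

/-- The unit square `[0,1]²`. -/
def unitSq : Set (ℝ × ℝ) := Set.Icc (0:ℝ) 1 ×ˢ Set.Icc (0:ℝ) 1

/-- Non-averaged finite-size Lyapunov exponent `u_n(x,y)`. -/
def uFS (lam E ω : ℝ) (n : ℕ) (x y : ℝ) : ℝ :=
  (1 / n : ℝ) * Real.log ‖Mmat lam E ω n x y‖

/-- Finite-size Lyapunov exponent `L_n(λ,E)`. -/
def LFS (lam E ω : ℝ) (n : ℕ) : ℝ :=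
  (1 / n : ℝ) * ∫ p in unitSq, Real.log ‖Mmat lam E ω n p.1 p.2‖

lemma euclid_norm_sq (y : EuclideanSpace ℝ (Fin 2)) : ‖y‖^2 = y 0^2 + y 1^2 := by
  rw [EuclideanSpace.norm_eq, Real.sq_sqrt (by positivity)]
  simp [Fin.sum_univ_two, sq_abs]

lemma l2norm_le_of_bound (A : Matrix (Fin 2) (Fin 2) ℝ) (C : ℝ) (hC : 0 ≤ C)
    (h : ∀ u v : ℝ, (A 0 0 * u + A 0 1 * v)^2 + (A 1 0 * u + A 1 1 * v)^2
        ≤ C^2 * (u^2 + v^2)) : ‖A‖ ≤ C := by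
  rw [Matrix.l2_opNorm_def]
  refine ContinuousLinearMap.opNorm_le_bound _ hC fun x => ?_
  have hx : (0:ℝ) ≤ C * ‖x‖ := by positivity
  have hsq : ‖(Matrix.toEuclideanLin.trans LinearMap.toContinuousLinearMap) A x‖^2
      ≤ (C * ‖x‖)^2 := by
    rw [euclid_norm_sq]
    have h2 : ((Matrix.toEuclideanLin.trans LinearMap.toContinuousLinearMap) A x : EuclideanSpace ℝ (Fin 2)) =
        Matrix.toEuclideanLin A x := rfl
    rw [h2, Matrix.toEuclideanLin_apply]
    have hx2 : ‖x‖^2 = x 0^2 + x 1^2 := euclid_norm_sq x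
    have := h (x 0) (x 1)
    calc _ ≤ C^2 * (x 0^2 + x 1^2) := by
            simpa [Matrix.mulVec, dotProduct, Fin.sum_univ_two] using this
      _ = (C*‖x‖)^2 := by rw [mul_pow, hx2]
  have := Real.sqrt_le_sqrt hsq
  rwa [Real.sqrt_sq (norm_nonneg _), Real.sqrt_sq hx] at this

lemma l2norm_col_le (A : Matrix (Fin 2) (Fin 2) ℝ) (j : Fin 2) :
    (A 0 j)^2 + (A 1 j)^2 ≤ ‖A‖^2 := by
  have h := Matrix.l2_opNorm_mulVec A (EuclideanSpace.single j 1)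
  rw [EuclideanSpace.norm_single, norm_one, mul_one] at h
  have hv : ((EuclideanSpace.equiv (Fin 2) ℝ).symm (A *ᵥ (EuclideanSpace.single j 1)) : EuclideanSpace ℝ (Fin 2)) 0 = A 0 j ∧
      ((EuclideanSpace.equiv (Fin 2) ℝ).symm (A *ᵥ (EuclideanSpace.single j 1)) : EuclideanSpace ℝ (Fin 2)) 1 = A 1 j := by
    constructor <;>
    · show (A *ᵥ _) _ = _
      simp [Matrix.mulVec, dotProduct, Fin.sum_univ_two, EuclideanSpace.single,
        Pi.single_apply]
  have := euclid_norm_sq ((EuclideanSpace.equiv (Fin 2) ℝ).symm (A *ᵥ (EuclideanSpace.single j 1)))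
  rw [hv.1, hv.2] at this
  rw [← this]
  exact pow_le_pow_left₀ (norm_nonneg _) h 2

lemma abs_skewV_le (ω : ℝ) (n : ℤ) (x y : ℝ) : |skewV ω n x y| ≤ 2 := by
  rw [skewV, abs_mul, abs_two]
  nlinarith [Real.abs_cos_le_one (2 * Real.pi * ((n * (n - 1) : ℝ) / 2 * ω + (n : ℝ) * y + x)),
    abs_nonneg (Real.cos (2 * Real.pi * ((n * (n - 1) : ℝ) / 2 * ω + (n : ℝ) * y + x)))]

lemma norm_Amat_le {E : ℝ} (hE : |E| ≤ 2.5) (ω : ℝ) (j : ℤ) (x y : ℝ) :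
    ‖Amat (1/2) E ω j x y‖ ≤ 4.5 := by
  set a := E - (1/2) * skewV ω j x y with ha
  have haa : |a| ≤ 3.5 := by
    have := abs_skewV_le ω j x y
    rw [ha]
    have h1 : |(1/2 : ℝ) * skewV ω j x y| ≤ 1 := by rw [abs_mul]; rw [abs_of_pos]; nlinarith; norm_num
    calc |E - (1/2) * skewV ω j x y| ≤ |E| + |(1/2:ℝ) * skewV ω j x y| := abs_sub _ _
      _ ≤ 2.5 + 1 := add_le_add hE h1
      _ = 3.5 := by norm_num
  have ha2 : a^2 ≤ 12.25 := by
    have h := mul_self_le_mul_self (abs_nonneg a) haa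
    rw [abs_mul_abs_self] at h
    nlinarith
  apply l2norm_le_of_bound _ _ (by norm_num)
  intro u v
  have e00 : Amat (1/2) E ω j x y 0 0 = a := rfl
  have e01 : Amat (1/2) E ω j x y 0 1 = -1 := rfl
  have e10 : Amat (1/2) E ω j x y 1 0 = 1 := rfl
  have e11 : Amat (1/2) E ω j x y 1 1 = 0 := rfl
  rw [e00, e01, e10, e11]
  nlinarith [sq_nonneg (a*u + 7*v), sq_nonneg (a*u - 7*v), sq_nonneg u, sq_nonneg v,
    mul_le_mul_of_nonneg_right ha2 (sq_nonneg u), mul_le_mul_of_nonneg_right ha2 (sq_nonneg v)]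

lemma det_Mmat (lam E ω : ℝ) (n : ℕ) (x y : ℝ) : (Mmat lam E ω n x y).det = 1 := by
  induction n with
  | zero => simp [Mmat]
  | succ n ih =>
    rw [Mmat, Matrix.det_mul, ih, mul_one, Amat, Matrix.det_fin_two_of]
    ring

lemma one_le_norm_Mmat (lam E ω : ℝ) (n : ℕ) (x y : ℝ) : 1 ≤ ‖Mmat lam E ω n x y‖ := by
  set M := Mmat lam E ω n x y with hM
  have hdet : M 0 0 * M 1 1 - M 0 1 * M 1 0 = 1 := by
    have := det_Mmat lam E ω n x y
    rwa [Matrix.det_fin_two] at this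
  have h0 := l2norm_col_le M 0
  have h1 := l2norm_col_le M 1
  nlinarith [norm_nonneg M, sq_nonneg (M 0 0 - M 1 1), sq_nonneg (M 0 1 + M 1 0)]

lemma norm_Mmat_le {E : ℝ} (hE : |E| ≤ 2.5) (ω : ℝ) (n : ℕ) (x y : ℝ) :
    ‖Mmat (1/2) E ω n x y‖ ≤ 4.5 ^ n := by
  induction n with
  | zero => simp [Mmat]
  | succ n ih =>
    rw [Mmat]
    calc ‖Amat (1/2) E ω (n+1:ℕ) x y * Mmat (1/2) E ω n x y‖
        ≤ ‖Amat (1/2) E ω (n+1:ℕ) x y‖ * ‖Mmat (1/2) E ω n x y‖ := Matrix.l2_opNorm_mul _ _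
      _ ≤ 4.5 * 4.5 ^ n := by
          apply mul_le_mul (norm_Amat_le hE ω _ x y) ih (norm_nonneg _) (by norm_num)
      _ = 4.5 ^ (n+1) := by ring

lemma log_le_two : Real.log 4.5 ≤ 2 := by
  rw [Real.log_le_iff_le_exp (by norm_num)]
  have h := Real.exp_one_gt_d9
  have : Real.exp 2 = Real.exp 1 * Real.exp 1 := by
    rw [← Real.exp_add]; norm_num
  nlinarith

lemma uFS_mem_Icc {E : ℝ} (hE : |E| ≤ 2.5) (ω : ℝ) {N : ℕ} (hN : 1 ≤ N) (x y : ℝ) :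
    uFS (1/2) E ω N x y ∈ Set.Icc (0:ℝ) 2 := by
  have h1 : (1:ℝ) ≤ ‖Mmat (1/2) E ω N x y‖ := one_le_norm_Mmat _ _ _ _ _ _
  have h2 : ‖Mmat (1/2) E ω N x y‖ ≤ 4.5 ^ N := norm_Mmat_le hE ω N x y
  have hlog0 : 0 ≤ Real.log ‖Mmat (1/2) E ω N x y‖ := Real.log_nonneg h1
  have hlogN : Real.log ‖Mmat (1/2) E ω N x y‖ ≤ N * 2 := by
    calc Real.log ‖Mmat (1/2) E ω N x y‖ ≤ Real.log (4.5 ^ N) :=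
          Real.log_le_log (by linarith) h2
      _ = N * Real.log 4.5 := by rw [Real.log_pow]
      _ ≤ N * 2 := by
          have : (0:ℝ) ≤ N := Nat.cast_nonneg N
          nlinarith [log_le_two]
  have hNpos : (0:ℝ) < N := by exact_mod_cast hN
  constructor
  · rw [uFS]; positivity
  · rw [uFS]
    rw [div_mul_eq_mul_div, one_mul, div_le_iff₀ hNpos]
    linarith

lemma measurable_uFS (lam E ω : ℝ) (n : ℕ) :
    Measurable (fun p : ℝ × ℝ => uFS lam E ω n p.1 p.2) := by
  have hM : Continuous (fun p : ℝ × ℝ => Mmat lam E ω n p.1 p.2) := by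
    induction n with
    | zero => simpa [Mmat] using continuous_const
    | succ n ih =>
      have hA : Continuous (fun p : ℝ × ℝ => Amat lam E ω (n+1:ℕ) p.1 p.2) := by
        apply continuous_matrix
        intro i j
        fin_cases i <;> fin_cases j <;> simp [Amat, skewV] <;> fun_prop
      simpa [Mmat] using hA.matrix_mul ih
  have : Measurable (fun p : ℝ × ℝ => Real.log ‖Mmat lam E ω n p.1 p.2‖) :=
    Real.measurable_log.comp (continuous_norm.comp hM).measurable
  exact this.const_mul _

lemma LFS_eq (E ω : ℝ) (N : ℕ) :
    LFS (1/2) E ω N = ∫ p in unitSq, uFS (1/2) E ω N p.1 p.2 := by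
  rw [LFS, ← MeasureTheory.integral_const_mul]
  rfl

/-- **Monte-Carlo error bound** (Lemma 3.2).  For `λ = 1/2`, `ω = (√5−1)/2`,
`|E| ≤ 2.5`, `N ≥ 1`, `P = 2001²` and `0 < ε < 1`, the Monte-Carlo estimator
`Q_N(P) = (1/P)·Σ_{i=1}^P u_N(x_i,y_i)` built from i.i.d. points uniformly
distributed on `[0,1]²` satisfies
`ℙ(|Q_N(P) − L_N(1/2,E)| > ε·10⁻²) ≤ 1/(300 ε²)`. -/
theorem monte_carlo_bound
    (E : ℝ) (hE : |E| ≤ 2.5) (N : ℕ) (hN : 1 ≤ N)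
    (ε : ℝ) (hε0 : 0 < ε) (hε1 : ε < 1)
    {Ω : Type*} [MeasurableSpace Ω] (μ : MeasureTheory.Measure Ω)
    [MeasureTheory.IsProbabilityMeasure μ]
    (Z : Fin (2001^2) → Ω → ℝ × ℝ)
    (hmeas : ∀ i, Measurable (Z i))
    (hindep : ProbabilityTheory.iIndepFun Z μ)
    (hunif : ∀ i, MeasureTheory.Measure.map (Z i) μ
        = MeasureTheory.volume.restrict unitSq) :
    μ {w | |(1 / (2001^2 : ℝ)) *
            (∑ i : Fin (2001^2),
              uFS (1/2) E ((Real.sqrt 5 - 1)/2) N (Z i w).1 (Z i w).2)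
          - LFS (1/2) E ((Real.sqrt 5 - 1)/2) N| > ε * 10^(-2 : ℤ)}
      ≤ ENNReal.ofReal (1 / (300 * ε^2)) := by
  set ω' : ℝ := (Real.sqrt 5 - 1)/2 with hω'
  set f : ℝ × ℝ → ℝ := fun p => uFS (1/2) E ω' N p.1 p.2 with hf
  have hfmeas : Measurable f := measurable_uFS _ _ _ _
  set L : ℝ := LFS (1/2) E ω' N with hL
  set X : Fin (2001^2) → Ω → ℝ := fun i w => f (Z i w) with hX
  have hXmeas : ∀ i, Measurable (X i) := fun i => hfmeas.comp (hmeas i)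
  have hbound : ∀ i, ∀ᵐ w ∂μ, X i w ∈ Set.Icc (0:ℝ) 2 :=
    fun i => ae_of_all _ fun w => uFS_mem_Icc hE ω' hN _ _
  have hL2 : ∀ i, MemLp (X i) 2 μ :=
    fun i => memLp_of_bounded (hbound i) (hXmeas i).aestronglyMeasurable 2
  have hint : ∀ i, Integrable (X i) μ := fun i => (hL2 i).integrable (by norm_num)
  have hEX : ∀ i, μ[X i] = L := by
    intro i
    have h1 : ∫ w, X i w ∂μ = ∫ p, f p ∂(MeasureTheory.Measure.map (Z i) μ) :=
      (integral_map (hmeas i).aemeasurable hfmeas.aestronglyMeasurable).symm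
    rw [show μ[X i] = ∫ w, X i w ∂μ from rfl, h1, hunif i, hL, LFS_eq]
  set S : Ω → ℝ := ∑ i, X i with hS
  have hSL2 : MemLp S 2 μ := memLp_finsetSum' _ (fun i _ => hL2 i)
  have hSapp : ∀ w, S w = ∑ i, X i w := fun w => Finset.sum_apply w Finset.univ X
  have hES : μ[S] = (2001^2 : ℝ) * L := by
    have h0 : μ[S] = ∫ w, ∑ i, X i w ∂μ := by
      apply integral_congr_ae
      exact ae_of_all _ fun w => hSapp w
    rw [h0, integral_finset_sum _ (fun i _ => hint i)]
    rw [Finset.sum_congr rfl (fun i _ => hEX i), Finset.sum_const, Finset.card_univ,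
      Fintype.card_fin, nsmul_eq_mul]
    push_cast
    ring
  have hindep' : iIndepFun X μ :=
    hindep.comp (fun _ => f) (fun _ => hfmeas)
  have hvar : variance S μ ≤ (2001^2 : ℝ) := by
    rw [hS, IndepFun.variance_sum (fun i _ => hL2 i)
      (fun i _ j _ hij => hindep'.indepFun hij)]
    calc ∑ i : Fin (2001^2), variance (X i) μ ≤ ∑ _i : Fin (2001^2), (1:ℝ) := by
          apply Finset.sum_le_sum
          intro i _
          have := variance_le_sq_of_bounded (hbound i) (hXmeas i).aemeasurable
          refine le_trans this (by norm_num)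
      _ = (2001^2 : ℝ) := by
          rw [Finset.sum_const, Finset.card_univ, Fintype.card_fin, nsmul_eq_mul, mul_one]
          push_cast
          ring
  set c : ℝ := (2001^2 : ℝ) * (ε * 10^(-2:ℤ)) with hc
  have hcpos : 0 < c := by positivity
  have hcheb := meas_ge_le_variance_div_sq (μ := μ) hSL2 hcpos
  refine le_trans (le_trans ?_ hcheb) ?_
  · apply measure_mono
    intro w hw
    simp only [Set.mem_setOf_eq] at hw ⊢
    rw [hES, hSapp]
    have hP : (0:ℝ) < (2001^2 : ℝ) := by norm_num
    have key : ∑ i, X i w - (2001^2:ℝ) * L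
        = (2001^2:ℝ) * ((1 / (2001^2 : ℝ)) * (∑ i, X i w) - L) := by
      field_simp
    rw [key, abs_mul, abs_of_pos hP, hc]
    exact mul_le_mul_of_nonneg_left (le_of_lt hw) (le_of_lt hP)
  · apply ENNReal.ofReal_le_ofReal
    have hc2 : c^2 = (2001^2:ℝ)^2 * ε^2 * (1/10000 : ℝ) := by
      rw [hc]
      have : ((10:ℝ))^(-2:ℤ) = 1/100 := by norm_num
      rw [this]
      ring
    have hc2pos : 0 < c^2 := by positivity
    rw [div_le_div_iff₀ hc2pos (by positivity)]
    have hε2' : 0 < ε^2 := by positivity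
    calc variance S μ * (300 * ε^2) ≤ (2001^2:ℝ) * (300 * ε^2) :=
          mul_le_mul_of_nonneg_right hvar (by positivity)
      _ ≤ 1 / (300 * ε^2) * c^2 * (300 * ε^2) := by
          rw [hc2]
          have hvv : (0:ℝ) < 300 * ε^2 := by positivity
          rw [div_mul_eq_mul_div, one_mul, div_mul_eq_mul_div, le_div_iff₀ hvv]
          nlinarith
      _ = 1 * c^2 := by field_simp

end
end

section
/- For every real number a, the operator norm of the 2×2 real matrix [[a, −1], [1, 0]] equals √(2 + a² + |a|·√(4 + a²)) / √2. -/
open scoped Matrix.Norms.L2Operator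

/-- The Euclidean operator norm of the one-step transfer-type matrix
`[[a, −1], [1, 0]]` equals `√(2 + a² + |a|·√(4 + a²)) / √2`. -/
theorem opNorm_transfer_matrix (a : ℝ) :
    ‖(!![a, -1; 1, 0] : Matrix (Fin 2) (Fin 2) ℝ)‖ =
      Real.sqrt (2 + a^2 + |a| * Real.sqrt (4 + a^2)) / Real.sqrt 2 := by
  set s := Real.sqrt (4 + a^2) with hs
  have hs0 : 0 ≤ s := Real.sqrt_nonneg _
  have hs2 : s^2 = 4 + a^2 := Real.sq_sqrt (by positivity)
  set u := |a| * s with hu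
  have hu0 : 0 ≤ u := mul_nonneg (abs_nonneg a) hs0
  have hu2 : u^2 = a^4 + 4*a^2 := by
    rw [hu, mul_pow, sq_abs, hs2]; ring
  have hua : a^2 ≤ u := by nlinarith [sq_nonneg a]
  clear_value s u
  set lam := (2 + a^2 + u)/2 with hlam
  have hlam0 : 0 ≤ lam := by rw [hlam]; nlinarith [sq_nonneg a]
  -- rewrite RHS as √lam
  have hRHS : Real.sqrt (2 + a^2 + u) / Real.sqrt 2 = Real.sqrt lam := by
    rw [hlam, Real.sqrt_div (by positivity)]
  rw [hRHS]
  set M : Matrix (Fin 2) (Fin 2) ℝ := !![a, -1; 1, 0] with hM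
  -- norm of vectors
  have norm_sq : ∀ y : EuclideanSpace ℝ (Fin 2), ‖y‖^2 = (y 0)^2 + (y 1)^2 := by
    intro y
    rw [EuclideanSpace.norm_eq, Real.sq_sqrt (by positivity)]
    simp [Fin.sum_univ_two, sq_abs]
  have coords : ∀ y : EuclideanSpace ℝ (Fin 2),
      (Matrix.toEuclideanLin M y) 0 = a * y 0 - y 1 ∧
      (Matrix.toEuclideanLin M y) 1 = y 0 := by
    intro y
    constructor <;>
    · simp [Matrix.toEuclideanLin_apply, hM, Matrix.mulVec, dotProduct,
        Fin.sum_univ_two, Matrix.vecHead, Matrix.vecTail]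
      try ring
  have quad : ∀ x0 x1 : ℝ, (a*x0 - x1)^2 + x0^2 ≤ lam * (x0^2 + x1^2) := by
    intro x0 x1
    rcases eq_or_ne a 0 with h0 | h0
    · have hu' : u = 0 := by simp [hu, h0]
      rw [hlam, hu', h0]
      ring_nf
      nlinarith [sq_nonneg x0, sq_nonneg x1]
    · have ha2 : 0 < a^2 := by positivity
      have hpos : 0 < u + a^2 := by linarith
      rw [hlam]
      nlinarith [sq_nonneg (2*a*x0 + (u+a^2)*x1), hu2, hpos]
  rw [Matrix.l2_opNorm_def]
  set f := (Matrix.toEuclideanLin.trans LinearMap.toContinuousLinearMap) M with hf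
  have hfapp : ∀ y : EuclideanSpace ℝ (Fin 2), f y = Matrix.toEuclideanLin M y := fun y => rfl
  apply le_antisymm
  · apply ContinuousLinearMap.opNorm_le_bound _ (Real.sqrt_nonneg _)
    intro y
    rw [hfapp]
    have h1 : ‖Matrix.toEuclideanLin M y‖^2 ≤ lam * ‖y‖^2 := by
      rw [norm_sq, norm_sq, (coords y).1, (coords y).2]
      exact quad (y 0) (y 1)
    calc ‖Matrix.toEuclideanLin M y‖
        = Real.sqrt (‖Matrix.toEuclideanLin M y‖^2) := (Real.sqrt_sq (norm_nonneg _)).symm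
      _ ≤ Real.sqrt (lam * ‖y‖^2) := Real.sqrt_le_sqrt h1
      _ = Real.sqrt lam * ‖y‖ := by
          rw [Real.sqrt_mul hlam0, Real.sqrt_sq (norm_nonneg _)]
  · obtain ⟨v0, v1, hvpos, hid⟩ :
        ∃ v0 v1 : ℝ, 0 < v0^2 + v1^2 ∧
          (a*v0 - v1)^2 + v0^2 = lam * (v0^2 + v1^2) := by
      rcases eq_or_ne a 0 with h0 | h0
      · refine ⟨1, 0, by norm_num, ?_⟩
        have hu' : u = 0 := by simp [hu, h0]
        rw [hlam, hu', h0]; ring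
      · refine ⟨a^2 + u, -2*a, ?_, ?_⟩
        · have ha2 : 0 < a^2 := by positivity
          nlinarith [sq_nonneg (a^2+u)]
        · rw [hlam]
          linear_combination (-(a^2 + u)/2) * hu2
    set v : EuclideanSpace ℝ (Fin 2) := (WithLp.equiv 2 (Fin 2 → ℝ)).symm ![v0, v1] with hv
    have hv0 : v 0 = v0 := rfl
    have hv1 : v 1 = v1 := rfl
    have hnv : 0 < ‖v‖ := by
      have : ‖v‖^2 = v0^2 + v1^2 := by rw [norm_sq, hv0, hv1]
      nlinarith [norm_nonneg v]
    have hfv : ‖f v‖ = Real.sqrt lam * ‖v‖ := by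
      have h2 : ‖f v‖^2 = lam * ‖v‖^2 := by
        rw [hfapp, norm_sq, (coords v).1, (coords v).2, hv0, hv1, hid, norm_sq, hv0, hv1]
      calc ‖f v‖ = Real.sqrt (‖f v‖^2) := (Real.sqrt_sq (norm_nonneg _)).symm
        _ = Real.sqrt (lam * ‖v‖^2) := by rw [h2]
        _ = Real.sqrt lam * ‖v‖ := by rw [Real.sqrt_mul hlam0, Real.sqrt_sq (norm_nonneg _)]
    have := f.le_opNorm v
    rw [hfv] at this
    exact le_of_mul_le_mul_right this hnv
end

section
/- Let λ = 1/2, ω ∈ ℝ, E ∈ ℝ with |E| ≤ 2.5, N ≥ 1, and P = 2001². If L_N(1/2,E) < 10⁻², then ℙ(Q_N(P) ≥ 0.08) ≤ 1/14700, where the probability is with respect to the i.i.d. uniform sample points. -/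
open scoped Matrix.Norms.L2Operator

noncomputable section

namespace MCaux

lemma coord_le_norm (y : EuclideanSpace ℝ (Fin 2)) (i : Fin 2) : |y i| ≤ ‖y‖ := by
  rw [EuclideanSpace.norm_eq, ← Real.sqrt_sq_eq_abs]
  apply Real.sqrt_le_sqrt
  fin_cases i <;> simp [Fin.sum_univ_two, Real.norm_eq_abs, sq_abs] <;>
    nlinarith [sq_nonneg (y 0), sq_nonneg (y 1)]

lemma entry_le_norm (A : Matrix (Fin 2) (Fin 2) ℝ) (i j : Fin 2) : |A i j| ≤ ‖A‖ := by
  have h := A.l2_opNorm_mulVec (EuclideanSpace.single j 1)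
  rw [EuclideanSpace.norm_single] at h
  simp only [norm_one, mul_one] at h
  refine le_trans ?_ h
  have hc := coord_le_norm ((EuclideanSpace.equiv (Fin 2) ℝ).symm
    (A.mulVec (EuclideanSpace.single j 1))) i
  refine le_trans (le_of_eq ?_) hc
  congr 1
  show A i j = (A.mulVec (EuclideanSpace.single j 1)) i
  simp [Matrix.mulVec, dotProduct, EuclideanSpace.single_apply]

lemma opnorm_le (A : Matrix (Fin 2) (Fin 2) ℝ) {c : ℝ} (hc : 0 ≤ c)
    (h : ∀ v : Fin 2 → ℝ, (A 0 0 * v 0 + A 0 1 * v 1)^2 + (A 1 0 * v 0 + A 1 1 * v 1)^2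
        ≤ c^2 * ((v 0)^2 + (v 1)^2)) : ‖A‖ ≤ c := by
  rw [Matrix.l2_opNorm_def]
  apply ContinuousLinearMap.opNorm_le_bound _ hc
  intro x
  rw [EuclideanSpace.norm_eq, EuclideanSpace.norm_eq]
  rw [← Real.sqrt_sq hc, ← Real.sqrt_mul (sq_nonneg c)]
  apply Real.sqrt_le_sqrt
  have hx : ∀ i, ((LinearEquiv.trans Matrix.toEuclideanLin LinearMap.toContinuousLinearMap A) x) i
      = A i 0 * x 0 + A i 1 * x 1 := by
    intro i
    show (A.mulVec x) i = _
    simp [Matrix.mulVec, dotProduct, Fin.sum_univ_two]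
  rw [Fin.sum_univ_two, Fin.sum_univ_two, hx, hx]
  simpa [Real.norm_eq_abs, sq_abs] using h x

lemma abs_skewV_le (ω : ℝ) (n : ℤ) (x y : ℝ) : |skewV ω n x y| ≤ 2 := by
  rw [skewV, abs_mul]
  have := Real.abs_cos_le_one (2 * Real.pi * ((n * (n - 1) : ℝ) / 2 * ω + (n : ℝ) * y + x))
  rw [abs_two]
  nlinarith

lemma norm_Amat_le {E : ℝ} (hE : |E| ≤ 2.5) (ω : ℝ) (j : ℤ) (x y : ℝ) :
    ‖Amat (1/2) E ω j x y‖ ≤ Real.sqrt 32 := by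
  apply opnorm_le _ (Real.sqrt_nonneg 32)
  intro v
  rw [Real.sq_sqrt (by norm_num : (32:ℝ) ≥ 0)]
  have h00 : Amat (1/2) E ω j x y 0 0 = E - (1/2) * skewV ω j x y := by simp [Amat]
  have h01 : Amat (1/2) E ω j x y 0 1 = -1 := by simp [Amat]
  have h10 : Amat (1/2) E ω j x y 1 0 = 1 := by simp [Amat]
  have h11 : Amat (1/2) E ω j x y 1 1 = 0 := by simp [Amat]
  rw [h00, h01, h10, h11]
  have hv := abs_skewV_le ω j x y
  have h1 : |E - (1/2) * skewV ω j x y| ≤ 3.5 := by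
    have := abs_sub_abs_le_abs_sub E ((1/2) * skewV ω j x y)
    rw [abs_le] at hE hv ⊢
    constructor <;> nlinarith [hv.1, hv.2, hE.1, hE.2]
  obtain ⟨a, ha⟩ : ∃ a : ℝ, a = E - (1/2) * skewV ω j x y := ⟨_, rfl⟩
  rw [← ha] at h00 h1 ⊢
  have ha2 : a^2 ≤ 12.25 := by
    rw [abs_le] at h1
    nlinarith [h1.1, h1.2]
  nlinarith [sq_nonneg (a * v 0 + v 1), sq_nonneg (v 0), sq_nonneg (v 1),
    mul_le_mul_of_nonneg_right ha2 (sq_nonneg (v 0))]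

lemma norm_Mmat_le {E : ℝ} (hE : |E| ≤ 2.5) (ω : ℝ) (n : ℕ) (x y : ℝ) :
    ‖Mmat (1/2) E ω n x y‖ ≤ (Real.sqrt 32)^n := by
  induction n with
  | zero => simp [Mmat]
  | succ n ih =>
      calc ‖Mmat (1/2) E ω (n+1) x y‖
          ≤ ‖Amat (1/2) E ω (n+1 : ℕ) x y‖ * ‖Mmat (1/2) E ω n x y‖ :=
            Matrix.l2_opNorm_mul _ _
        _ ≤ Real.sqrt 32 * (Real.sqrt 32)^n := by
            apply mul_le_mul (norm_Amat_le hE ω _ x y) ih (norm_nonneg _) (Real.sqrt_nonneg 32)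
        _ = (Real.sqrt 32)^(n+1) := by ring

lemma det_Mmat (lam E ω : ℝ) (n : ℕ) (x y : ℝ) : (Mmat lam E ω n x y).det = 1 := by
  induction n with
  | zero => simp [Mmat]
  | succ n ih =>
      rw [Mmat, Matrix.det_mul, ih, mul_one, Amat, Matrix.det_fin_two_of]
      ring

lemma norm_Mmat_lb (lam E ω : ℝ) (n : ℕ) (x y : ℝ) :
    (Real.sqrt 2)⁻¹ ≤ ‖Mmat lam E ω n x y‖ := by
  set A := Mmat lam E ω n x y with hA
  have hdet : A 0 0 * A 1 1 - A 0 1 * A 1 0 = 1 := by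
    rw [← Matrix.det_fin_two A, det_Mmat]
  have h00 := entry_le_norm A 0 0
  have h01 := entry_le_norm A 0 1
  have h10 := entry_le_norm A 1 0
  have h11 := entry_le_norm A 1 1
  have hn : 0 ≤ ‖A‖ := norm_nonneg _
  have h2 : 1 ≤ 2 * ‖A‖^2 := by
    have t1 : A 0 0 * A 1 1 ≤ ‖A‖ * ‖A‖ := by
      calc A 0 0 * A 1 1 ≤ |A 0 0 * A 1 1| := le_abs_self _
        _ = |A 0 0| * |A 1 1| := abs_mul _ _
        _ ≤ ‖A‖ * ‖A‖ := mul_le_mul h00 h11 (abs_nonneg _) hn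
    have t2 : -(A 0 1 * A 1 0) ≤ ‖A‖ * ‖A‖ := by
      calc -(A 0 1 * A 1 0) ≤ |A 0 1 * A 1 0| := neg_le_abs _
        _ = |A 0 1| * |A 1 0| := abs_mul _ _
        _ ≤ ‖A‖ * ‖A‖ := mul_le_mul h01 h10 (abs_nonneg _) hn
    nlinarith [t1, t2]
  rw [← Real.sqrt_inv, ← Real.sqrt_sq hn]
  exact Real.sqrt_le_sqrt (by nlinarith)

lemma contA (lam E ω : ℝ) (j : ℤ) :
    Continuous fun p : ℝ × ℝ => Amat lam E ω j p.1 p.2 := by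
  apply continuous_matrix
  intro i j'
  fin_cases i <;> fin_cases j' <;> simp [Amat, skewV] <;> fun_prop

lemma contM (lam E ω : ℝ) (n : ℕ) :
    Continuous fun p : ℝ × ℝ => Mmat lam E ω n p.1 p.2 := by
  induction n with
  | zero => exact continuous_const
  | succ n ih => exact (contA lam E ω (n+1 : ℕ)).matrix_mul ih

lemma uFS_mem {E : ℝ} (hE : |E| ≤ 2.5) (ω : ℝ) {N : ℕ} (hN : 1 ≤ N) (x y : ℝ) :
    uFS (1/2) E ω N x y ∈ Set.Icc (-(Real.log 2)/2) (5/2 * Real.log 2) := by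
  have hlb := norm_Mmat_lb (1/2) E ω N x y
  have hub := norm_Mmat_le hE ω N x y
  have hpos : (0:ℝ) < ‖Mmat (1/2) E ω N x y‖ := lt_of_lt_of_le (by positivity) hlb
  have hlog_lb : -(Real.log 2)/2 ≤ Real.log ‖Mmat (1/2) E ω N x y‖ := by
    have h := Real.log_le_log (by positivity) hlb
    rw [Real.log_inv, Real.log_sqrt (by norm_num)] at h
    linarith
  have hlog_ub : Real.log ‖Mmat (1/2) E ω N x y‖ ≤ N * (5/2 * Real.log 2) := by
    have h := Real.log_le_log hpos hub
    rw [Real.log_pow, Real.log_sqrt (by norm_num)] at h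
    have h32 : Real.log 32 = 5 * Real.log 2 := by
      rw [show (32:ℝ) = 2^5 by norm_num, Real.log_pow]
      push_cast; ring
    rw [h32] at h
    calc Real.log ‖Mmat (1/2) E ω N x y‖ ≤ N * (5 * Real.log 2 / 2) := h
      _ = N * (5/2 * Real.log 2) := by ring
  have hN0 : (0:ℝ) < N := by exact_mod_cast Nat.pos_of_ne_zero (by omega)
  have hN1 : (1:ℝ)/N ≤ 1 := by
    rw [div_le_one hN0]; exact_mod_cast hN
  have hNpos : (0:ℝ) < 1/N := by positivity
  have hl2 : 0 ≤ Real.log 2 := Real.log_nonneg one_le_two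
  constructor
  · rw [uFS]
    rcases le_or_gt 0 (Real.log ‖Mmat (1/2) E ω N x y‖) with h | h
    · nlinarith
    · nlinarith [mul_le_mul_of_nonpos_right hN1 h.le]
  · rw [uFS]
    calc (1/N : ℝ) * Real.log ‖Mmat (1/2) E ω N x y‖
        ≤ (1/N : ℝ) * (N * (5/2 * Real.log 2)) := by
          exact mul_le_mul_of_nonneg_left hlog_ub hNpos.le
      _ = 5/2 * Real.log 2 := by field_simp

end MCaux

open MeasureTheory ProbabilityTheory MCaux

/-- If `λ = 1/2`, `|E| ≤ 2.5`, `N ≥ 1`, `P = 2001²` and `L_N(1/2,E) < 10⁻²`,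
then the Monte-Carlo estimator built from i.i.d. uniform points on `[0,1]²`
satisfies `ℙ(Q_N(P) ≥ 0.08) ≤ 1/14700`. -/

theorem monte_carlo_consequence
    (ω E : ℝ) (hE : |E| ≤ 2.5) (N : ℕ) (hN : 1 ≤ N)
    {Ω : Type*} [MeasurableSpace Ω] (μ : MeasureTheory.Measure Ω)
    [MeasureTheory.IsProbabilityMeasure μ]
    (Z : Fin (2001^2) → Ω → ℝ × ℝ)
    (hmeas : ∀ i, Measurable (Z i))
    (hindep : ProbabilityTheory.iIndepFun Z μ)
    (hunif : ∀ i, MeasureTheory.Measure.map (Z i) μ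
        = MeasureTheory.volume.restrict unitSq)
    (hL : LFS (1/2) E ω N < 10^(-2 : ℤ)) :
    μ {w | (1 / (2001^2 : ℝ)) *
            (∑ i : Fin (2001^2), uFS (1/2) E ω N (Z i w).1 (Z i w).2)
          ≥ 0.08}
      ≤ ENNReal.ofReal (1 / 14700) := by
  classical
  have hL' : LFS (1/2) E ω N < 1/100 := by
    have : ((10:ℝ))^(-2 : ℤ) = 1/100 := by norm_num
    linarith [hL.trans_le this.le]
  set a : ℝ := -(Real.log 2)/2 with ha
  set b : ℝ := 5/2 * Real.log 2 with hb
  set f : ℝ × ℝ → ℝ := fun p => uFS (1/2) E ω N p.1 p.2 with hf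
  have hfab : ∀ p : ℝ × ℝ, f p ∈ Set.Icc a b := fun p => uFS_mem hE ω hN p.1 p.2
  have hfmeas : Measurable f := by
    have h1 : Measurable fun p : ℝ × ℝ => Real.log ‖Mmat (1/2) E ω N p.1 p.2‖ :=
      Real.measurable_log.comp (contM (1/2) E ω N).norm.measurable
    exact (h1.const_mul _)
  set X : Fin (2001^2) → Ω → ℝ := fun i => f ∘ Z i with hXdef
  have hXmeas : ∀ i, Measurable (X i) := fun i => hfmeas.comp (hmeas i)
  have hXmem : ∀ i, MemLp (X i) 2 μ := fun i =>
    memLp_of_bounded (Filter.Eventually.of_forall fun w => hfab (Z i w))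
      (hXmeas i).aestronglyMeasurable 2
  have hXint : ∀ i, Integrable (X i) μ := fun i =>
    (hXmem i).integrable (by norm_num)
  have hEX : ∀ i, μ[X i] = LFS (1/2) E ω N := by
    intro i
    have h1 : μ[X i] = ∫ p, f p ∂(Measure.map (Z i) μ) :=
      (integral_map (hmeas i).aemeasurable hfmeas.aestronglyMeasurable).symm
    rw [h1, hunif i]
    show ∫ p in unitSq, (1 / N : ℝ) * Real.log ‖Mmat (1/2) E ω N p.1 p.2‖ = _
    rw [LFS, ← MeasureTheory.integral_const_mul]
  set S : Ω → ℝ := ∑ i, X i with hS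
  have hSapp : ∀ w, S w = ∑ i, X i w := fun w => Finset.sum_apply w Finset.univ X
  have hSmem : MemLp S 2 μ := memLp_finsetSum' _ (fun i _ => hXmem i)
  have hES : μ[S] = (2001:ℝ)^2 * LFS (1/2) E ω N := by
    have h1 : μ[S] = ∫ w, ∑ i, X i w ∂μ :=
      integral_congr_ae (Filter.Eventually.of_forall fun w => hSapp w)
    rw [h1, integral_finset_sum _ (fun i _ => hXint i)]
    simp only [hEX]
    rw [Finset.sum_const, Finset.card_univ, Fintype.card_fin, nsmul_eq_mul]
    push_cast; ring
  set c : ℝ := (2001:ℝ)^2 * (7/100) with hc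
  have hcpos : 0 < c := by norm_num [hc]
  have hsub : {w | (1 / (2001^2 : ℝ)) *
            (∑ i : Fin (2001^2), uFS (1/2) E ω N (Z i w).1 (Z i w).2)
          ≥ 0.08} ⊆ {w | c ≤ |S w - μ[S]|} := by
    intro w hw
    have hw' : (0.08:ℝ) ≤ (1 / (2001^2 : ℝ)) * ∑ i, X i w := hw
    have hSw : (0.08:ℝ) * (2001:ℝ)^2 ≤ S w := by
      rw [hSapp w]
      nlinarith [hw']
    simp only [Set.mem_setOf_eq]
    rw [hES]
    have : c ≤ S w - (2001:ℝ)^2 * LFS (1/2) E ω N := by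
      rw [hc]; nlinarith [hL', hSw]
    exact this.trans (le_abs_self _)
  refine le_trans (measure_mono hsub) ?_
  refine le_trans (meas_ge_le_variance_div_sq hSmem hcpos) ?_
  apply ENNReal.ofReal_le_ofReal
  have hvarX : ∀ i, variance (X i) μ ≤ ((b - a)/2)^2 := fun i =>
    variance_le_sq_of_bounded (Filter.Eventually.of_forall fun w => hfab (Z i w))
      (hXmeas i).aemeasurable
  have hindep' : iIndepFun X μ :=
    hindep.comp (fun _ => f) (fun _ => hfmeas)
  have hpair : Set.Pairwise ↑(Finset.univ : Finset (Fin (2001^2)))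
      (fun i j => IndepFun (X i) (X j) μ) :=
    fun i _ j _ hij => hindep'.indepFun hij
  have hvarS : variance S μ = ∑ i, variance (X i) μ :=
    IndepFun.variance_sum (fun i _ => hXmem i) hpair
  have hvarS' : variance S μ ≤ (2001:ℝ)^2 * ((b - a)/2)^2 := by
    rw [hvarS]
    calc ∑ i, variance (X i) μ ≤ ∑ _i : Fin (2001^2), ((b - a)/2)^2 :=
          Finset.sum_le_sum (fun i _ => hvarX i)
      _ = (2001:ℝ)^2 * ((b - a)/2)^2 := by
          rw [Finset.sum_const, Finset.card_univ, Fintype.card_fin, nsmul_eq_mul]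
          push_cast; ring
  rw [div_le_iff₀ (by positivity)]
  have hl2 : Real.log 2 < 0.6931471808 := Real.log_two_lt_d9
  have hl0 : 0 ≤ Real.log 2 := Real.log_nonneg one_le_two
  have hba : (b - a)/2 = 3/2 * Real.log 2 := by rw [ha, hb]; ring
  rw [hba] at hvarS'
  have hvnn : 0 ≤ variance S μ := variance_nonneg _ _
  rw [hc]
  nlinarith [hvarS', hl2, hl0, mul_le_mul_of_nonneg_left hl2.le hl0]

end
end
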